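/- Let G be a graph with minimum degree at least 1 and a strongly antimagic labeling f inducing the vertex ordering v_1, ..., v_n by increasing φ-value. Suppose j satisfies either deg(v_{j+1}) < deg(v_{j+2}) or j+1 = n. Then the graph G* obtained from G by adding a new vertex v* together with the edge v* v_{j+1} is strongly antimagic; moreover G* has a strongly antimagic labeling whose induced ordering on V(G) agrees with that of f, with v* placed first. -/

import Mathlib

open Finset

open scoped Classical

noncomputable section

variable {V : Type*} [Fintype V] [DecidableEq V]

/-- The finset of edges of a simple graph on a finite vertex type. -/
def edges (G : SimpleGraph V) : Finset (Sym2 V) :=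
  Finset.univ.filter (fun e => e ∈ G.edgeSet)

/-- The vertex sum `φ_f(v)`: the sum of the labels of the edges incident to `v`. -/
def phi (G : SimpleGraph V) (f : Sym2 V → ℕ) (v : V) : ℕ :=
  ∑ e ∈ (edges G).filter (fun e => v ∈ e), f e

/-- The degree of a vertex: the number of edges incident to it. -/
def deg (G : SimpleGraph V) (v : V) : ℕ :=
  ((edges G).filter (fun e => v ∈ e)).card

/-- `f` is a strongly antimagic labeling of `G`: a bijection from the edge set onto
`{1, …, m}` with pairwise distinct vertex sums, such that larger degree forces a
larger vertex sum. -/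
def IsStronglyAntimagicLabeling (G : SimpleGraph V) (f : Sym2 V → ℕ) : Prop :=
  Set.BijOn f (edges G : Set (Sym2 V)) (Set.Icc 1 (edges G).card) ∧
  (∀ u v : V, u ≠ v → phi G f u ≠ phi G f v) ∧
  (∀ u v : V, deg G v < deg G u → phi G f v < phi G f u)

/-- A graph is strongly antimagic if it admits a strongly antimagic labeling. -/
def IsStronglyAntimagic (G : SimpleGraph V) : Prop :=
  ∃ f : Sym2 V → ℕ, IsStronglyAntimagicLabeling G f

/-- Add a pendant edge at `x`: a new vertex (`none`) joined to `some x`. -/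
def addPendant (G : SimpleGraph V) (x : V) : SimpleGraph (Option V) :=
  SimpleGraph.fromEdgeSet ((Sym2.map some '' G.edgeSet) ∪ {s((none : Option V), some x)})

set_option linter.unusedSectionVars false

set_option maxHeartbeats 1000000 in
lemma mem_edges {G : SimpleGraph V} {e : Sym2 V} : e ∈ edges G ↔ e ∈ G.edgeSet := by
  simp [edges]

lemma edgeSet_addPendant (G : SimpleGraph V) (x : V) :
    (addPendant G x).edgeSet = (Sym2.map some '' G.edgeSet) ∪ {s((none : Option V), some x)} := by
  rw [addPendant, SimpleGraph.edgeSet_fromEdgeSet]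
  refine sdiff_eq_left.2 (Set.disjoint_left.2 ?_)
  rintro e he hd
  rw [Sym2.mem_diagSet] at hd
  rcases he with ⟨e', he', rfl⟩ | he
  · exact G.not_isDiag_of_mem_edgeSet he'
      ((Sym2.isDiag_map (Option.some_injective V)).1 hd)
  · simp only [Set.mem_singleton_iff] at he
    subst he
    simp [Sym2.mk_isDiag_iff] at hd

lemma none_not_mem_map_some (e : Sym2 V) : (none : Option V) ∉ Sym2.map some e := by
  simp [Sym2.mem_map]

lemma edges_addPendant (G : SimpleGraph V) (x : V) :
    edges (addPendant G x) = (edges G).image (Sym2.map some) ∪ {s((none : Option V), some x)} := by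
  ext e
  simp only [mem_edges, edgeSet_addPendant, Set.mem_union, Set.mem_image, Set.mem_singleton_iff,
    Finset.mem_union, Finset.mem_image, Finset.mem_singleton, edges, Finset.mem_filter,
    Finset.mem_univ, true_and]

lemma new_edge_not_mem_image (G : SimpleGraph V) (x : V) (s : Finset (Sym2 V)) :
    s((none : Option V), some x) ∉ s.image (Sym2.map some) := by
  simp only [Finset.mem_image, not_exists]
  rintro e ⟨_, he⟩
  exact none_not_mem_map_some e (he ▸ (by simp : (none : Option V) ∈ s((none : Option V), some x)))

lemma filter_incident_some (G : SimpleGraph V) (x u : V) :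
    ((edges (addPendant G x)).filter (fun e => some u ∈ e)) =
      ((edges G).filter (fun e => u ∈ e)).image (Sym2.map some) ∪
        (if u = x then {s((none : Option V), some x)} else ∅) := by
  ext e
  have hmem : ∀ e' : Sym2 V, some u ∈ Sym2.map some e' ↔ u ∈ e' := by
    intro e'; simp [Sym2.mem_map, (Option.some_injective V).eq_iff]
  have hnew : some u ∈ s((none : Option V), some x) ↔ u = x := by
    simp [(Option.some_injective V).eq_iff]
  simp only [edges_addPendant, Finset.mem_filter, Finset.mem_union, Finset.mem_image,
    Finset.mem_singleton]
  constructor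
  · rintro ⟨hsrc, hm⟩
    rcases hsrc with ⟨e', he', rfl⟩ | rfl
    · exact Or.inl ⟨e', ⟨he', (hmem e').1 hm⟩, rfl⟩
    · right
      rw [if_pos (hnew.1 hm)]
      exact Finset.mem_singleton_self _
  · rintro (⟨e', ⟨he'1, he'2⟩, rfl⟩ | hm)
    · exact ⟨Or.inl ⟨e', he'1, rfl⟩, (hmem e').2 he'2⟩
    · by_cases hux : u = x
      · rw [if_pos hux, Finset.mem_singleton] at hm; subst hm
        exact ⟨Or.inr rfl, hnew.2 hux⟩
      · rw [if_neg hux] at hm; simp at hm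

lemma filter_incident_none (G : SimpleGraph V) (x : V) :
    ((edges (addPendant G x)).filter (fun e => (none : Option V) ∈ e)) =
      {s((none : Option V), some x)} := by
  ext e
  simp only [edges_addPendant, Finset.mem_filter, Finset.mem_union, Finset.mem_image,
    Finset.mem_singleton]
  constructor
  · rintro ⟨⟨e', _, rfl⟩ | rfl, hm⟩
    · exact absurd hm (none_not_mem_map_some e')
    · rfl
  · rintro rfl; exact ⟨Or.inr rfl, by simp⟩

def pendantLabel (f : Sym2 V → ℕ) (x : V) : Sym2 (Option V) → ℕ :=
  fun e => if (none : Option V) ∈ e then 1 else f (Sym2.map (fun o => o.getD x) e) + 1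

lemma pendantLabel_map_some (f : Sym2 V → ℕ) (x : V) (e : Sym2 V) :
    pendantLabel f x (Sym2.map some e) = f e + 1 := by
  rw [pendantLabel, if_neg (none_not_mem_map_some e), Sym2.map_map]
  congr 2
  exact congrFun Sym2.map_id e

lemma pendantLabel_new (f : Sym2 V → ℕ) (x : V) :
    pendantLabel f x s((none : Option V), some x) = 1 := by
  simp [pendantLabel]

lemma sym2_map_some_inj : Function.Injective (Sym2.map (some : V → Option V)) :=
  Sym2.map.injective (Option.some_injective V)

lemma deg_addPendant_some (G : SimpleGraph V) (x u : V) :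
    deg (addPendant G x) (some u) = deg G u + (if u = x then 1 else 0) := by
  rw [deg, filter_incident_some, Finset.card_union_of_disjoint, Finset.card_image_of_injective _ sym2_map_some_inj]
  · congr 1
    split <;> simp
  · split
    · exact Finset.disjoint_singleton_right.2 (new_edge_not_mem_image G x _)
    · simp

lemma deg_addPendant_none (G : SimpleGraph V) (x : V) :
    deg (addPendant G x) (none : Option V) = 1 := by
  rw [deg, filter_incident_none]; simp

lemma phi_addPendant_some (G : SimpleGraph V) (f : Sym2 V → ℕ) (x u : V) :
    phi (addPendant G x) (pendantLabel f x) (some u) =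
      phi G f u + deg G u + (if u = x then 1 else 0) := by
  rw [phi, filter_incident_some, Finset.sum_union, Finset.sum_image (fun a _ b _ h => sym2_map_some_inj h)]
  · have : ∑ e ∈ (edges G).filter (fun e => u ∈ e), pendantLabel f x (Sym2.map some e)
        = ∑ e ∈ (edges G).filter (fun e => u ∈ e), (f e + 1) :=
      Finset.sum_congr rfl (fun e _ => pendantLabel_map_some f x e)
    have h2 : ∑ e ∈ (if u = x then ({s((none : Option V), some x)} : Finset (Sym2 (Option V))) else ∅),
        pendantLabel f x e = (if u = x then 1 else 0) := by
      split <;> simp [pendantLabel_new]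
    rw [h2, this, Finset.sum_add_distrib, Finset.sum_const, smul_eq_mul, mul_one]
    rfl
  · split
    · exact Finset.disjoint_singleton_right.2 (new_edge_not_mem_image G x _)
    · simp

lemma phi_addPendant_none (G : SimpleGraph V) (f : Sym2 V → ℕ) (x : V) :
    phi (addPendant G x) (pendantLabel f x) (none : Option V) = 1 := by
  rw [phi, filter_incident_none]
  simp [pendantLabel_new]

lemma card_edges_addPendant (G : SimpleGraph V) (x : V) :
    (edges (addPendant G x)).card = (edges G).card + 1 := by
  rw [edges_addPendant, Finset.card_union_of_disjoint (by simpa using new_edge_not_mem_image G x _),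
    Finset.card_image_of_injective _ sym2_map_some_inj]
  simp

/-- pendant-edge extension at the vertex `v j` (the paper's `v_{j+1}`),
assuming either `v j` is last in the ordering or its degree is strictly smaller than
that of the next vertex in the ordering. -/
theorem stmt_1 (G : SimpleGraph V) (hdelta : ∀ w : V, 1 ≤ deg G w)
    (f : Sym2 V → ℕ) (hf : IsStronglyAntimagicLabeling G f)
    (n : ℕ) (hn : n = Fintype.card V)
    (v : Fin n → V) (hv : Function.Bijective v)
    (hmono : StrictMono (fun i : Fin n => phi G f (v i)))
    (j : Fin n)
    (hj : (j : ℕ) + 1 = n ∨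
      ∃ h : (j : ℕ) + 1 < n, deg G (v j) < deg G (v ⟨(j : ℕ) + 1, h⟩)) :
    IsStronglyAntimagic (addPendant G (v j)) ∧
    ∃ g : Sym2 (Option V) → ℕ,
      IsStronglyAntimagicLabeling (addPendant G (v j)) g ∧
      StrictMono (fun i : Fin n => phi (addPendant G (v j)) g (some (v i))) ∧
      ∀ i : Fin n, phi (addPendant G (v j)) g none < phi (addPendant G (v j)) g (some (v i)) := by
  classical
  obtain ⟨hbij, hphi_ne, hdeg_phi⟩ := hf
  have hvinj := hv.1
  have hlab : ∀ e ∈ edges G, 1 ≤ f e ∧ f e ≤ (edges G).card := by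
    intro e he
    exact Set.mem_Icc.1 (hbij.1 (Finset.mem_coe.2 he))
  have hphi1 : ∀ u : V, 1 ≤ phi G f u := by
    intro u
    obtain ⟨e, he⟩ := Finset.card_pos.1 (by simpa [deg] using hdelta u)
    exact le_trans (hlab e (Finset.mem_filter.1 he).1).1
      (Finset.single_le_sum (fun i _ => Nat.zero_le (f i)) he)
  have hdegmono : ∀ i k : Fin n, i ≤ k → deg G (v i) ≤ deg G (v k) := by
    intro i k hik
    rcases eq_or_lt_of_le hik with h | h
    · rw [h]
    · by_contra hc
      push_neg at hc
      have h1 := hdeg_phi (v i) (v k) hc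
      have h2 : phi G f (v i) < phi G f (v k) := hmono h
      omega
  have hD : ∀ i k : Fin n, i ≤ k →
      deg G (v i) + (if v i = v j then 1 else 0) ≤
        deg G (v k) + (if v k = v j then 1 else 0) := by
    intro i k hik
    rcases eq_or_lt_of_le hik with h | hlt
    · rw [h]
    · by_cases hij : i = j
      · subst hij
        have hk1 : (i : ℕ) + 1 ≤ (k : ℕ) := Fin.lt_def.1 hlt
        have hkn : (i : ℕ) + 1 < n := lt_of_le_of_lt hk1 k.isLt
        rcases hj with hj1 | ⟨h', hj2⟩
        · omega
        · have h3 : deg G (v ⟨(i : ℕ) + 1, h'⟩) ≤ deg G (v k) :=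
            hdegmono _ _ (by rw [Fin.le_def]; exact hk1)
          have hkj : v k ≠ v i := fun h => (ne_of_gt hlt) (hvinj h)
          rw [if_pos rfl, if_neg hkj]
          omega
      · have hvi : v i ≠ v j := fun h => hij (hvinj h)
        rw [if_neg hvi]
        by_cases hkj : k = j
        · subst hkj
          rw [if_pos rfl]
          have := hdegmono i k hik
          omega
        · rw [if_neg (fun h => hkj (hvinj h))]
          simpa using hdegmono i k hik
  have hm1 : (edges (addPendant G (v j))).card = (edges G).card + 1 :=
    card_edges_addPendant G (v j)
  have hΦmono : StrictMono
      (fun i : Fin n => phi (addPendant G (v j)) (pendantLabel f (v j)) (some (v i))) := by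
    intro i k hlt
    have h1 : phi G f (v i) < phi G f (v k) := hmono hlt
    have h2 := hD i k (le_of_lt hlt)
    show phi (addPendant G (v j)) (pendantLabel f (v j)) (some (v i)) <
      phi (addPendant G (v j)) (pendantLabel f (v j)) (some (v k))
    rw [phi_addPendant_some, phi_addPendant_some]
    omega
  have hlow : ∀ i : Fin n, phi (addPendant G (v j)) (pendantLabel f (v j)) none <
      phi (addPendant G (v j)) (pendantLabel f (v j)) (some (v i)) := by
    intro i
    rw [phi_addPendant_none, phi_addPendant_some]
    have := hphi1 (v i); have := hdelta (v i); omega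
  have hlabg : IsStronglyAntimagicLabeling (addPendant G (v j)) (pendantLabel f (v j)) := by
    refine ⟨⟨?_, ?_, ?_⟩, ?_, ?_⟩
    · -- MapsTo
      intro e he
      rw [Finset.mem_coe, edges_addPendant, Finset.mem_union] at he
      rw [hm1, Set.mem_Icc]
      rcases he with he | he
      · obtain ⟨e', he', rfl⟩ := Finset.mem_image.1 he
        rw [pendantLabel_map_some]
        have := hlab e' he'
        omega
      · rw [Finset.mem_singleton] at he; subst he
        rw [pendantLabel_new]
        omega
    · -- InjOn
      intro e1 h1 e2 h2 heq
      rw [Finset.mem_coe, edges_addPendant, Finset.mem_union] at h1 h2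
      rcases h1 with h1 | h1 <;> rcases h2 with h2 | h2
      · obtain ⟨a, ha, rfl⟩ := Finset.mem_image.1 h1
        obtain ⟨b, hb, rfl⟩ := Finset.mem_image.1 h2
        rw [pendantLabel_map_some, pendantLabel_map_some] at heq
        have hab : f a = f b := by omega
        exact congrArg _ (hbij.2.1 (Finset.mem_coe.2 ha) (Finset.mem_coe.2 hb) hab)
      · obtain ⟨a, ha, rfl⟩ := Finset.mem_image.1 h1
        rw [Finset.mem_singleton] at h2; subst h2
        rw [pendantLabel_map_some, pendantLabel_new] at heq
        have := (hlab a ha).1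
        exact absurd heq (by omega)
      · obtain ⟨b, hb, rfl⟩ := Finset.mem_image.1 h2
        rw [Finset.mem_singleton] at h1; subst h1
        rw [pendantLabel_new, pendantLabel_map_some] at heq
        have := (hlab b hb).1
        exact absurd heq (by omega)
      · rw [Finset.mem_singleton] at h1 h2; rw [h1, h2]
    · -- SurjOn
      intro k hk
      rw [hm1, Set.mem_Icc] at hk
      by_cases hk1 : k = 1
      · subst hk1
        refine ⟨s((none : Option V), some (v j)), ?_, pendantLabel_new f (v j)⟩
        rw [Finset.mem_coe, edges_addPendant]
        exact Finset.mem_union_right _ (Finset.mem_singleton_self _)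
      · have hk2 : k - 1 ∈ Set.Icc 1 (edges G).card := Set.mem_Icc.2 ⟨by omega, by omega⟩
        obtain ⟨e', he', hfe⟩ := hbij.2.2 hk2
        refine ⟨Sym2.map some e', ?_, ?_⟩
        · rw [Finset.mem_coe, edges_addPendant]
          exact Finset.mem_union_left _ (Finset.mem_image_of_mem _ (Finset.mem_coe.1 he'))
        · rw [pendantLabel_map_some, hfe]; omega
    · -- distinct phi
      intro u w hne
      rcases u with _ | a <;> rcases w with _ | b
      · exact absurd rfl hne
      · rw [phi_addPendant_none, phi_addPendant_some]
        have := hphi1 b; have := hdelta b; omega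
      · rw [phi_addPendant_none, phi_addPendant_some]
        have := hphi1 a; have := hdelta a; omega
      · obtain ⟨i, rfl⟩ := hv.2 a
        obtain ⟨k, rfl⟩ := hv.2 b
        have hik : i ≠ k := fun h => hne (by rw [h])
        rcases lt_or_gt_of_ne hik with h | h
        · exact ne_of_lt (hΦmono h)
        · exact (ne_of_lt (hΦmono h)).symm
    · -- degree condition
      intro u w hdw
      rcases u with _ | a <;> rcases w with _ | b
      · rw [deg_addPendant_none] at hdw
        exact absurd hdw (lt_irrefl _)
      · rw [deg_addPendant_none, deg_addPendant_some] at hdw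
        rw [phi_addPendant_none, phi_addPendant_some]
        have := hdelta b; omega
      · rw [phi_addPendant_none, phi_addPendant_some]
        have := hphi1 a; have := hdelta a; omega
      · obtain ⟨i, rfl⟩ := hv.2 a
        obtain ⟨k, rfl⟩ := hv.2 b
        rw [deg_addPendant_some, deg_addPendant_some] at hdw
        have hki : k < i := by
          by_contra hc
          push_neg at hc
          have := hD i k hc
          omega
        exact hΦmono hki
  exact ⟨⟨_, hlabg⟩, pendantLabel f (v j), hlabg, hΦmono, hlow⟩
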